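/- Let d₁,…,d_N > 0, κ ≥ 1 and h_i(u) = |min(κu, max(d_i, max(1, u))) - d_i|. Then G₁(u) = Σ_{i=1}^N h_i(u)² is convex and continuously differentiable on the interval [1, d₁] (whenever d₁ ≥ 1). -/
import Mathlib

noncomputable def phiG1 (x : ℝ) : ℝ := (max x 0) ^ 2

lemma phiG1_hasDerivAt (x : ℝ) : HasDerivAt phiG1 (2 * max x 0) x := by
  rcases lt_trichotomy x 0 with hx | hx | hx
  · have h : phiG1 =ᶠ[nhds x] fun _ => (0:ℝ) := by
      filter_upwards [Iio_mem_nhds hx] with y hy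
      simp [phiG1, max_eq_right (le_of_lt (Set.mem_Iio.mp hy))]
    have h0 : HasDerivAt (fun _ => (0:ℝ)) 0 x := hasDerivAt_const x 0
    rw [max_eq_right hx.le]
    simpa using h0.congr_of_eventuallyEq h
  · subst hx
    rw [hasDerivAt_iff_isLittleO]
    rw [Asymptotics.isLittleO_iff]
    intro c hc
    filter_upwards [Metric.ball_mem_nhds (0:ℝ) hc] with y hy
    rw [Metric.mem_ball, Real.dist_eq, sub_zero] at hy
    have h1 : |max y 0| ≤ |y| := by
      rw [abs_of_nonneg (le_max_right y 0)]
      exact max_le (le_abs_self y) (abs_nonneg y)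
    simp only [phiG1, sub_zero, smul_eq_mul, max_self, Real.norm_eq_abs]
    have h2 : |max y 0 ^ 2 - 0 ^ 2 - y * (2 * 0)| = |max y 0| ^ 2 := by
      rw [← abs_pow]; ring_nf
    rw [h2]
    have hay : |y| < c := hy
    nlinarith [abs_nonneg y, abs_nonneg (max y 0)]
  · have h : phiG1 =ᶠ[nhds x] fun y => y ^ 2 := by
      filter_upwards [Ioi_mem_nhds hx] with y hy
      simp [phiG1, max_eq_left (le_of_lt (Set.mem_Ioi.mp hy))]
    have h0 : HasDerivAt (fun y : ℝ => y ^ 2) (2 * x) x := by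
      simpa using hasDerivAt_pow 2 x
    rw [max_eq_left hx.le]
    exact h0.congr_of_eventuallyEq h

lemma phiG1_contDiff : ContDiff ℝ 1 phiG1 := by
  rw [contDiff_one_iff_deriv]
  refine ⟨fun x => (phiG1_hasDerivAt x).differentiableAt, ?_⟩
  have hd : deriv phiG1 = fun x => 2 * max x 0 :=
    funext fun x => (phiG1_hasDerivAt x).deriv
  rw [hd]
  exact continuous_const.mul (continuous_id.max continuous_const)

lemma phiG1_convex : ConvexOn ℝ Set.univ phiG1 := by
  refine ⟨convex_univ, ?_⟩
  intro x _ y _ a b ha hb hab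
  simp only [phiG1, smul_eq_mul]
  have hx : (0:ℝ) ≤ max x 0 := le_max_right _ _
  have hy : (0:ℝ) ≤ max y 0 := le_max_right _ _
  have key : max (a*x + b*y) 0 ≤ a * max x 0 + b * max y 0 := by
    apply max_le
    · nlinarith [le_max_left x 0, le_max_left y 0]
    · nlinarith
  have h0 : (0:ℝ) ≤ max (a*x + b*y) 0 := le_max_right _ _
  nlinarith [sq_nonneg (max x 0 - max y 0), mul_nonneg ha hb]

lemma summandG1_convex (di κ : ℝ) :
    ConvexOn ℝ Set.univ (fun u => phiG1 (u - di) + phiG1 (di - κ*u)) := by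
  refine ⟨convex_univ, ?_⟩
  intro x _ y _ a b ha hb hab
  have h1 := phiG1_convex.2 (Set.mem_univ (x - di)) (Set.mem_univ (y - di)) ha hb hab
  have h2 := phiG1_convex.2 (Set.mem_univ (di - κ*x)) (Set.mem_univ (di - κ*y)) ha hb hab
  simp only [smul_eq_mul] at h1 h2 ⊢
  have e1 : a*x + b*y - di = a*(x - di) + b*(y - di) := by linear_combination di * hab
  have e2 : di - κ*(a*x + b*y) = a*(di - κ*x) + b*(di - κ*y) := by
    linear_combination (-di) * hab
  rw [e1, e2]
  linarith

lemma keyG1_eq (di κ u : ℝ) (hdi : 0 < di) (hκ : 1 ≤ κ) (hu : 1 ≤ u) :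
    (|min (κ * u) (max di (max 1 u)) - di|) ^ 2
      = phiG1 (u - di) + phiG1 (di - κ * u) := by
  have hmax1 : max 1 u = u := max_eq_right hu
  rw [hmax1]
  have hκu : u ≤ κ * u := le_mul_of_one_le_left (by linarith) hκ
  rcases le_total di u with h | h
  · rw [max_eq_right h, min_eq_right hκu, abs_of_nonneg (by linarith)]
    simp only [phiG1]
    rw [max_eq_left (by linarith), max_eq_right (by linarith)]
    ring
  · rw [max_eq_left h]
    rcases le_total (κ*u) di with h2 | h2
    · rw [min_eq_left h2, abs_of_nonpos (by linarith)]
      simp only [phiG1]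
      rw [max_eq_right (by linarith), max_eq_left (by linarith)]
      ring
    · rw [min_eq_right h2]
      simp only [phiG1]
      rw [max_eq_right (by linarith), max_eq_right (by linarith)]
      simp

/-- The Frobenius-norm one-dimensional objective `G₁(u) = Σᵢ hᵢ(u)²` is convex and
continuously differentiable on `[1, d₁]`. -/
theorem G1_convex_contDiff (N : ℕ) (hN : 0 < N) (d : ℕ → ℝ) (κ : ℝ)
    (hdpos : ∀ i < N, 0 < d i)
    (hdec : ∀ i j, i ≤ j → j < N → d j ≤ d i)
    (hκ : 1 ≤ κ) (hd1 : 1 ≤ d 0)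
    (G : ℝ → ℝ)
    (hG : ∀ u, G u = ∑ i ∈ Finset.range N,
      (|min (κ * u) (max (d i) (max 1 u)) - d i|) ^ 2) :
    ConvexOn ℝ (Set.Icc 1 (d 0)) G ∧ ContDiffOn ℝ 1 G (Set.Icc 1 (d 0)) := by
  set F : ℝ → ℝ := fun u => ∑ i ∈ Finset.range N,
    (phiG1 (u - d i) + phiG1 (d i - κ * u)) with hF
  have heq : ∀ u, 1 ≤ u → G u = F u := by
    intro u hu
    rw [hG]
    exact Finset.sum_congr rfl fun i hi =>
      keyG1_eq (d i) κ u (hdpos i (Finset.mem_range.mp hi)) hκ hu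
  have hFconv : ConvexOn ℝ Set.univ F := by
    refine ⟨convex_univ, ?_⟩
    intro x _ y _ a b ha hb hab
    simp only [hF, smul_eq_mul, Finset.mul_sum, ← Finset.sum_add_distrib]
    apply Finset.sum_le_sum
    intro i _
    have := (summandG1_convex (d i) κ).2 (Set.mem_univ x) (Set.mem_univ y) ha hb hab
    simpa using this
  have hFcd : ContDiff ℝ 1 F := by
    apply ContDiff.sum
    intro i _
    exact (phiG1_contDiff.comp (contDiff_id.sub contDiff_const)).add
      (phiG1_contDiff.comp (contDiff_const.sub (contDiff_const.mul contDiff_id)))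
  constructor
  · refine ⟨convex_Icc _ _, ?_⟩
    intro x hx y hy a b ha hb hab
    have hxy : a • x + b • y ∈ Set.Icc 1 (d 0) := (convex_Icc _ _) hx hy ha hb hab
    rw [heq _ hx.1, heq _ hy.1, heq _ hxy.1]
    exact hFconv.2 (Set.mem_univ x) (Set.mem_univ y) ha hb hab
  · exact hFcd.contDiffOn.congr fun x hx => heq x hx.1
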